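/- arXiv:2312.07704 — 2 statements merged into one kernel-verified Lean document; each statement's English description precedes it below -/
import Mathlib

section
/- Let m₁, m₂, ν₁, ν₂ > 0 satisfy m₁ − m₂ > ν₂ − ν₁, m₁/ν₁ ≥ m₂/ν₂, m₁ − m₂ + 2ν₁ > 0, and ν₂ > m₁. Then for all u > 0 and 0 < w < 1, A₂ · π₂(u) · φ(w) ≤ h(u,w) ≤ A₁ · π₁(u) · φ(w), where h(u,w) = K₀ · u^{(m₁+m₂)/2−1} · w^{m₁/2−1} · (1−w)^{m₂/2−1} · (1 + m₁uw/ν₁)^{−(m₁+ν₁)/2} · (1 + m₂u(1−w)/ν₂)^{−(m₂+ν₂)/2}. (This is the sub-independence property of U = Y₁+Y₂ and W = Y₁/(Y₁+Y₂) for independent F-distributed Y₁, Y₂.) -/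
open Real MeasureTheory Set

/-- Beta function `B(a,b) = Γ(a)Γ(b)/Γ(a+b)`. -/
noncomputable def Beta (a b : ℝ) : ℝ := Gamma a * Gamma b / Gamma (a + b)

/-- The normalizing constant `K₀`. -/
noncomputable def K₀ (m₁ m₂ ν₁ ν₂ : ℝ) : ℝ :=
  (m₁ / ν₁) ^ (m₁ / 2) * (m₂ / ν₂) ^ (m₂ / 2) /
    (Beta (m₁ / 2) (ν₁ / 2) * Beta (m₂ / 2) (ν₂ / 2))

/-- The joint density `h(u,w)` of `(U,W)` on `u > 0`, `0 < w < 1`. -/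
noncomputable def hDens (m₁ m₂ ν₁ ν₂ : ℝ) (u w : ℝ) : ℝ :=
  K₀ m₁ m₂ ν₁ ν₂ * u ^ ((m₁ + m₂) / 2 - 1) * w ^ (m₁ / 2 - 1) * (1 - w) ^ (m₂ / 2 - 1) *
    (1 + m₁ * u * w / ν₁) ^ (-(m₁ + ν₁) / 2) *
    (1 + m₂ * u * (1 - w) / ν₂) ^ (-(m₂ + ν₂) / 2)

/-- The Beta density `φ(w)` with shape parameters `m₁/2`, `m₂/2`. -/
noncomputable def phi (m₁ m₂ : ℝ) (w : ℝ) : ℝ :=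
  w ^ (m₁ / 2 - 1) * (1 - w) ^ (m₂ / 2 - 1) / Beta (m₁ / 2) (m₂ / 2)

/-- The density `π₁(u)`. -/
noncomputable def pi₁ (m₁ m₂ ν₂ : ℝ) (u : ℝ) : ℝ :=
  (m₂ / ν₂) ^ ((m₁ + m₂) / 2) * u ^ ((m₁ + m₂) / 2 - 1) *
    (1 + m₂ * u / ν₂) ^ (-(m₂ + ν₂) / 2) / Beta ((m₁ + m₂) / 2) ((ν₂ - m₁) / 2)

/-- The density `π₂(u)`. -/
noncomputable def pi₂ (m₁ m₂ ν₁ : ℝ) (u : ℝ) : ℝ :=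
  (m₁ / (2 * ν₁)) ^ ((m₁ + m₂) / 2) * u ^ ((m₁ + m₂) / 2 - 1) *
    (1 + m₁ * u / (2 * ν₁)) ^ (-(m₁ + ν₁)) / Beta ((m₁ + m₂) / 2) ((m₁ - m₂ + 2 * ν₁) / 2)

/-- The constant `A₁`. -/
noncomputable def A₁ (m₁ m₂ ν₁ ν₂ : ℝ) : ℝ :=
  (m₁ * ν₂ / (m₂ * ν₁)) ^ (m₁ / 2) * Beta ((m₁ + m₂) / 2) ((ν₂ - m₁) / 2) *
    Beta (m₁ / 2) (m₂ / 2) / (Beta (m₁ / 2) (ν₁ / 2) * Beta (m₂ / 2) (ν₂ / 2))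

/-- The constant `A₂`. -/
noncomputable def A₂ (m₁ m₂ ν₁ ν₂ : ℝ) : ℝ :=
  2 ^ ((m₁ + m₂) / 2) * (m₂ * ν₁ / (m₁ * ν₂)) ^ (m₂ / 2) *
    Beta ((m₁ + m₂) / 2) ((m₁ - m₂ + 2 * ν₁) / 2) *
    Beta (m₁ / 2) (m₂ / 2) / (Beta (m₁ / 2) (ν₁ / 2) * Beta (m₂ / 2) (ν₂ / 2))


/-- Auxiliary algebraic identity used to rewrite `Aᵢ πᵢ φ`. -/
lemma subIndep_alg (P Q R B1 B2 Bab Bs U W1 W2 Z : ℝ) (hBs : Bs ≠ 0) (hBab : Bab ≠ 0)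
    (hPQ : P * Q = R) :
    P * Bs * Bab / (B1 * B2) * (Q * U * Z / Bs) * (W1 * W2 / Bab)
      = R / (B1 * B2) * U * W1 * W2 * Z := by
  have e : P * Bs * Bab / (B1 * B2) * (Q * U * Z / Bs) * (W1 * W2 / Bab)
      = P * Q * U * Z * W1 * W2 / (B1 * B2) * (Bs / Bs) * (Bab / Bab) := by ring
  rw [e, div_self hBs, div_self hBab, mul_one, mul_one, ← hPQ]
  ring

/-- Sub-independence of `U = Y₁+Y₂` and `W = Y₁/(Y₁+Y₂)`: the joint density `h(u,w)`
is bracketed as `A₂ π₂(u) φ(w) ≤ h(u,w) ≤ A₁ π₁(u) φ(w)`. -/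
theorem subIndependence_bounds
    (m₁ m₂ ν₁ ν₂ : ℝ) (hm₁ : 0 < m₁) (hm₂ : 0 < m₂) (hν₁ : 0 < ν₁) (hν₂ : 0 < ν₂)
    (h1 : ν₂ - ν₁ < m₁ - m₂) (h2 : m₂ / ν₂ ≤ m₁ / ν₁)
    (h3 : 0 < m₁ - m₂ + 2 * ν₁) (h4 : m₁ < ν₂)
    (u w : ℝ) (hu : 0 < u) (hw0 : 0 < w) (hw1 : w < 1) :
    A₂ m₁ m₂ ν₁ ν₂ * pi₂ m₁ m₂ ν₁ u * phi m₁ m₂ w ≤ hDens m₁ m₂ ν₁ ν₂ u w ∧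
      hDens m₁ m₂ ν₁ ν₂ u w ≤ A₁ m₁ m₂ ν₁ ν₂ * pi₁ m₁ m₂ ν₂ u * phi m₁ m₂ w := by
  have hB : ∀ a b : ℝ, 0 < a → 0 < b → 0 < Beta a b := fun a b ha hb =>
    div_pos (mul_pos (Real.Gamma_pos_of_pos ha) (Real.Gamma_pos_of_pos hb))
      (Real.Gamma_pos_of_pos (by linarith))
  have hw1' : (0:ℝ) < 1 - w := by linarith
  have hB1 : (0:ℝ) < Beta (m₁/2) (ν₁/2) := hB _ _ (by linarith) (by linarith)
  have hB2 : (0:ℝ) < Beta (m₂/2) (ν₂/2) := hB _ _ (by linarith) (by linarith)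
  have hBab : (0:ℝ) < Beta (m₁/2) (m₂/2) := hB _ _ (by linarith) (by linarith)
  have hBs1 : (0:ℝ) < Beta ((m₁+m₂)/2) ((ν₂-m₁)/2) := hB _ _ (by linarith) (by linarith)
  have hBs2 : (0:ℝ) < Beta ((m₁+m₂)/2) ((m₁-m₂+2*ν₁)/2) := hB _ _ (by linarith) (by linarith)
  -- constant identities
  have c1 : (m₁*ν₂/(m₂*ν₁)) ^ (m₁/2) * (m₂/ν₂) ^ ((m₁+m₂)/2)
      = (m₁/ν₁)^(m₁/2) * (m₂/ν₂)^(m₂/2) := by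
    rw [show (m₁+m₂)/2 = m₁/2 + m₂/2 by ring,
      Real.rpow_add (show (0:ℝ) < m₂/ν₂ by positivity), ← mul_assoc,
      ← Real.mul_rpow (by positivity) (by positivity),
      show m₁*ν₂/(m₂*ν₁) * (m₂/ν₂) = m₁/ν₁ by field_simp]
  have c2 : (2:ℝ)^((m₁+m₂)/2) * (m₂*ν₁/(m₁*ν₂))^(m₂/2) * (m₁/(2*ν₁))^((m₁+m₂)/2)
      = (m₁/ν₁)^(m₁/2) * (m₂/ν₂)^(m₂/2) := by
    have e : (2:ℝ)^((m₁+m₂)/2) * (m₁/(2*ν₁))^((m₁+m₂)/2) = (m₁/ν₁)^((m₁+m₂)/2) := by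
      rw [← Real.mul_rpow (by norm_num) (by positivity)]
      congr 1
      field_simp
    calc (2:ℝ)^((m₁+m₂)/2) * (m₂*ν₁/(m₁*ν₂))^(m₂/2) * (m₁/(2*ν₁))^((m₁+m₂)/2)
        = (2:ℝ)^((m₁+m₂)/2) * (m₁/(2*ν₁))^((m₁+m₂)/2) * (m₂*ν₁/(m₁*ν₂))^(m₂/2) := by ring
      _ = (m₁/ν₁)^((m₁+m₂)/2) * (m₂*ν₁/(m₁*ν₂))^(m₂/2) := by rw [e]
      _ = (m₁/ν₁)^(m₁/2) * ((m₁/ν₁)^(m₂/2) * (m₂*ν₁/(m₁*ν₂))^(m₂/2)) := by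
          rw [show (m₁+m₂)/2 = m₁/2 + m₂/2 by ring,
            Real.rpow_add (show (0:ℝ) < m₁/ν₁ by positivity)]; ring
      _ = (m₁/ν₁)^(m₁/2) * (m₂/ν₂)^(m₂/2) := by
          rw [← Real.mul_rpow (by positivity) (by positivity),
            show m₁/ν₁ * (m₂*ν₁/(m₁*ν₂)) = m₂/ν₂ by field_simp]
  -- positivity of factors
  have hX1 : (1:ℝ) ≤ 1 + m₁*u*w/ν₁ := by linarith [div_pos (mul_pos (mul_pos hm₁ hu) hw0) hν₁]
  have hY1 : (1:ℝ) ≤ 1 + m₂*u*(1-w)/ν₂ := by linarith [div_pos (mul_pos (mul_pos hm₂ hu) hw1') hν₂]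
  have hX0 : (0:ℝ) < 1 + m₁*u*w/ν₁ := lt_of_lt_of_le one_pos hX1
  have hY0 : (0:ℝ) < 1 + m₂*u*(1-w)/ν₂ := lt_of_lt_of_le one_pos hY1
  have hZ10 : (0:ℝ) < 1 + m₂*u/ν₂ := by positivity
  have hZ20 : (0:ℝ) < 1 + m₁*u/(2*ν₁) := by positivity
  have hmv : m₂*ν₁ ≤ m₁*ν₂ := by
    rw [div_le_div_iff₀ hν₂ hν₁] at h2; linarith
  have hqp : -(m₁+ν₁)/2 ≤ -(m₂+ν₂)/2 := by linarith
  -- upper core inequality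
  have hU : (1 + m₁*u*w/ν₁) ^ (-(m₁+ν₁)/2) * (1 + m₂*u*(1-w)/ν₂) ^ (-(m₂+ν₂)/2)
      ≤ (1 + m₂*u/ν₂) ^ (-(m₂+ν₂)/2) := by
    have s1 : (1 + m₁*u*w/ν₁) ^ (-(m₁+ν₁)/2) ≤ (1 + m₁*u*w/ν₁) ^ (-(m₂+ν₂)/2) :=
      Real.rpow_le_rpow_of_exponent_le hX1 hqp
    have h5 : m₂*u*w/ν₂ ≤ m₁*u*w/ν₁ := by
      rw [div_le_div_iff₀ hν₂ hν₁]
      linarith [mul_le_mul_of_nonneg_right hmv (le_of_lt (mul_pos hu hw0))]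
    have hprod : (0:ℝ) ≤ (m₁*u*w/ν₁)*(m₂*u*(1-w)/ν₂) := by positivity
    have h6 : m₂*u/ν₂ = m₂*u*w/ν₂ + m₂*u*(1-w)/ν₂ := by ring
    have h7 : (1 + m₁*u*w/ν₁) * (1 + m₂*u*(1-w)/ν₂)
        = 1 + m₁*u*w/ν₁ + m₂*u*(1-w)/ν₂ + (m₁*u*w/ν₁)*(m₂*u*(1-w)/ν₂) := by ring
    have key : 1 + m₂*u/ν₂ ≤ (1 + m₁*u*w/ν₁) * (1 + m₂*u*(1-w)/ν₂) := by
      rw [h6, h7]; linarith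
    calc (1 + m₁*u*w/ν₁) ^ (-(m₁+ν₁)/2) * (1 + m₂*u*(1-w)/ν₂) ^ (-(m₂+ν₂)/2)
        ≤ (1 + m₁*u*w/ν₁) ^ (-(m₂+ν₂)/2) * (1 + m₂*u*(1-w)/ν₂) ^ (-(m₂+ν₂)/2) :=
          mul_le_mul_of_nonneg_right s1 (Real.rpow_nonneg hY0.le _)
      _ = ((1 + m₁*u*w/ν₁) * (1 + m₂*u*(1-w)/ν₂)) ^ (-(m₂+ν₂)/2) :=
          (Real.mul_rpow hX0.le hY0.le).symm
      _ ≤ (1 + m₂*u/ν₂) ^ (-(m₂+ν₂)/2) :=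
          Real.rpow_le_rpow_of_nonpos hZ10 key (by linarith)
  -- lower core inequality
  have hL : (1 + m₁*u/(2*ν₁)) ^ (-(m₁+ν₁))
      ≤ (1 + m₁*u*w/ν₁) ^ (-(m₁+ν₁)/2) * (1 + m₂*u*(1-w)/ν₂) ^ (-(m₂+ν₂)/2) := by
    have hX'1 : (1:ℝ) ≤ 1 + m₁*u*(1-w)/ν₁ := by
      linarith [div_pos (mul_pos (mul_pos hm₁ hu) hw1') hν₁]
    have hX'0 : (0:ℝ) < 1 + m₁*u*(1-w)/ν₁ := lt_of_lt_of_le one_pos hX'1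
    have hyx : 1 + m₂*u*(1-w)/ν₂ ≤ 1 + m₁*u*(1-w)/ν₁ := by
      have h5 : m₂*u*(1-w)/ν₂ ≤ m₁*u*(1-w)/ν₁ := by
        rw [div_le_div_iff₀ hν₂ hν₁]
        linarith [mul_le_mul_of_nonneg_right hmv (le_of_lt (mul_pos hu hw1'))]
      linarith
    have pos : (0:ℝ) ≤ (m₁+ν₁)/2 := by linarith
    have id1 : (1 + m₁*u/(2*ν₁)) * (1 + m₁*u/(2*ν₁))
        - (1 + m₁*u*w/ν₁) * (1 + m₁*u*(1-w)/ν₁) = (m₁*u/ν₁*(w - 1/2))^2 := by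
      field_simp
      ring
    have key : (1 + m₁*u*w/ν₁) * (1 + m₁*u*(1-w)/ν₁)
        ≤ (1 + m₁*u/(2*ν₁)) * (1 + m₁*u/(2*ν₁)) := by
      linarith [id1, sq_nonneg (m₁*u/ν₁*(w - 1/2))]
    have main : (1 + m₁*u*w/ν₁) ^ ((m₁+ν₁)/2) * (1 + m₂*u*(1-w)/ν₂) ^ ((m₂+ν₂)/2)
        ≤ (1 + m₁*u/(2*ν₁)) ^ (m₁+ν₁) := by
      calc (1 + m₁*u*w/ν₁) ^ ((m₁+ν₁)/2) * (1 + m₂*u*(1-w)/ν₂) ^ ((m₂+ν₂)/2)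
          ≤ (1 + m₁*u*w/ν₁) ^ ((m₁+ν₁)/2) * (1 + m₁*u*(1-w)/ν₁) ^ ((m₁+ν₁)/2) := by
            apply mul_le_mul_of_nonneg_left _ (Real.rpow_nonneg hX0.le _)
            calc (1 + m₂*u*(1-w)/ν₂) ^ ((m₂+ν₂)/2)
                ≤ (1 + m₁*u*(1-w)/ν₁) ^ ((m₂+ν₂)/2) :=
                  Real.rpow_le_rpow hY0.le hyx (by linarith)
              _ ≤ (1 + m₁*u*(1-w)/ν₁) ^ ((m₁+ν₁)/2) :=
                  Real.rpow_le_rpow_of_exponent_le hX'1 (by linarith)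
        _ = ((1 + m₁*u*w/ν₁) * (1 + m₁*u*(1-w)/ν₁)) ^ ((m₁+ν₁)/2) :=
            (Real.mul_rpow hX0.le hX'0.le).symm
        _ ≤ ((1 + m₁*u/(2*ν₁)) * (1 + m₁*u/(2*ν₁))) ^ ((m₁+ν₁)/2) :=
            Real.rpow_le_rpow (by positivity) key pos
        _ = (1 + m₁*u/(2*ν₁)) ^ (m₁+ν₁) := by
            rw [Real.mul_rpow hZ20.le hZ20.le, ← Real.rpow_add hZ20]
            norm_num
    have lhs_eq : (1 + m₁*u/(2*ν₁)) ^ (-(m₁+ν₁)) = ((1 + m₁*u/(2*ν₁)) ^ (m₁+ν₁))⁻¹ :=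
      Real.rpow_neg hZ20.le _
    have rhs_eq : (1 + m₁*u*w/ν₁) ^ (-(m₁+ν₁)/2) * (1 + m₂*u*(1-w)/ν₂) ^ (-(m₂+ν₂)/2)
        = ((1 + m₁*u*w/ν₁) ^ ((m₁+ν₁)/2) * (1 + m₂*u*(1-w)/ν₂) ^ ((m₂+ν₂)/2))⁻¹ := by
      rw [mul_inv, show -(m₁+ν₁)/2 = -((m₁+ν₁)/2) by ring,
        show -(m₂+ν₂)/2 = -((m₂+ν₂)/2) by ring,
        Real.rpow_neg hX0.le, Real.rpow_neg hY0.le]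
    rw [lhs_eq, rhs_eq]
    exact inv_anti₀ (by positivity) main
  -- equality reductions
  have e1 : A₁ m₁ m₂ ν₁ ν₂ * pi₁ m₁ m₂ ν₂ u * phi m₁ m₂ w
      = K₀ m₁ m₂ ν₁ ν₂ * u ^ ((m₁+m₂)/2 - 1) * w ^ (m₁/2 - 1) * (1-w) ^ (m₂/2 - 1)
        * (1 + m₂*u/ν₂) ^ (-(m₂+ν₂)/2) := by
    unfold A₁ pi₁ phi K₀
    exact subIndep_alg _ _ _ _ _ _ _ _ _ _ _ hBs1.ne' hBab.ne' c1
  have e2 : A₂ m₁ m₂ ν₁ ν₂ * pi₂ m₁ m₂ ν₁ u * phi m₁ m₂ w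
      = K₀ m₁ m₂ ν₁ ν₂ * u ^ ((m₁+m₂)/2 - 1) * w ^ (m₁/2 - 1) * (1-w) ^ (m₂/2 - 1)
        * (1 + m₁*u/(2*ν₁)) ^ (-(m₁+ν₁)) := by
    unfold A₂ pi₂ phi K₀
    exact subIndep_alg _ _ _ _ _ _ _ _ _ _ _ hBs2.ne' hBab.ne' c2
  have hC : (0:ℝ) ≤ K₀ m₁ m₂ ν₁ ν₂ * u ^ ((m₁+m₂)/2 - 1) * w ^ (m₁/2 - 1) * (1-w) ^ (m₂/2 - 1) := by
    have hK : (0:ℝ) < K₀ m₁ m₂ ν₁ ν₂ :=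
      div_pos (mul_pos (Real.rpow_pos_of_pos (by positivity) _)
        (Real.rpow_pos_of_pos (by positivity) _)) (mul_pos hB1 hB2)
    exact le_of_lt (mul_pos (mul_pos (mul_pos hK (Real.rpow_pos_of_pos hu _))
      (Real.rpow_pos_of_pos hw0 _)) (Real.rpow_pos_of_pos hw1' _))
  constructor
  · rw [e2]
    show _ ≤ K₀ m₁ m₂ ν₁ ν₂ * u ^ ((m₁+m₂)/2 - 1) * w ^ (m₁/2 - 1) * (1-w) ^ (m₂/2 - 1)
        * (1 + m₁*u*w/ν₁) ^ (-(m₁+ν₁)/2) * (1 + m₂*u*(1-w)/ν₂) ^ (-(m₂+ν₂)/2)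
    calc K₀ m₁ m₂ ν₁ ν₂ * u ^ ((m₁+m₂)/2 - 1) * w ^ (m₁/2 - 1) * (1-w) ^ (m₂/2 - 1)
          * (1 + m₁*u/(2*ν₁)) ^ (-(m₁+ν₁))
        ≤ K₀ m₁ m₂ ν₁ ν₂ * u ^ ((m₁+m₂)/2 - 1) * w ^ (m₁/2 - 1) * (1-w) ^ (m₂/2 - 1)
          * ((1 + m₁*u*w/ν₁) ^ (-(m₁+ν₁)/2) * (1 + m₂*u*(1-w)/ν₂) ^ (-(m₂+ν₂)/2)) :=
          mul_le_mul_of_nonneg_left hL hC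
      _ = K₀ m₁ m₂ ν₁ ν₂ * u ^ ((m₁+m₂)/2 - 1) * w ^ (m₁/2 - 1) * (1-w) ^ (m₂/2 - 1)
          * (1 + m₁*u*w/ν₁) ^ (-(m₁+ν₁)/2) * (1 + m₂*u*(1-w)/ν₂) ^ (-(m₂+ν₂)/2) := by ring
  · rw [e1]
    show K₀ m₁ m₂ ν₁ ν₂ * u ^ ((m₁+m₂)/2 - 1) * w ^ (m₁/2 - 1) * (1-w) ^ (m₂/2 - 1)
        * (1 + m₁*u*w/ν₁) ^ (-(m₁+ν₁)/2) * (1 + m₂*u*(1-w)/ν₂) ^ (-(m₂+ν₂)/2) ≤ _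
    calc K₀ m₁ m₂ ν₁ ν₂ * u ^ ((m₁+m₂)/2 - 1) * w ^ (m₁/2 - 1) * (1-w) ^ (m₂/2 - 1)
          * (1 + m₁*u*w/ν₁) ^ (-(m₁+ν₁)/2) * (1 + m₂*u*(1-w)/ν₂) ^ (-(m₂+ν₂)/2)
        = K₀ m₁ m₂ ν₁ ν₂ * u ^ ((m₁+m₂)/2 - 1) * w ^ (m₁/2 - 1) * (1-w) ^ (m₂/2 - 1)
          * ((1 + m₁*u*w/ν₁) ^ (-(m₁+ν₁)/2) * (1 + m₂*u*(1-w)/ν₂) ^ (-(m₂+ν₂)/2)) := by ring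
      _ ≤ K₀ m₁ m₂ ν₁ ν₂ * u ^ ((m₁+m₂)/2 - 1) * w ^ (m₁/2 - 1) * (1-w) ^ (m₂/2 - 1)
          * (1 + m₂*u/ν₂) ^ (-(m₂+ν₂)/2) :=
          mul_le_mul_of_nonneg_left hU hC
end

section
/- Let m₁, m₂, ν₁, ν₂ > 0 satisfy m₁ − m₂ > ν₂ − ν₁, m₁/ν₁ ≥ m₂/ν₂, m₁ − m₂ + 2ν₁ > 0, and ν₂ > m₁. Define the marginal function h_W(w) = ∫₀^∞ h(u,w) du, where h(u,w) = K₀ · u^{(m₁+m₂)/2−1} · w^{m₁/2−1} · (1−w)^{m₂/2−1} · (1 + m₁uw/ν₁)^{−(m₁+ν₁)/2} · (1 + m₂u(1−w)/ν₂)^{−(m₂+ν₂)/2}. Then for all 0 < w < 1, A₂ · φ(w) ≤ h_W(w) ≤ A₁ · φ(w). -/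
open Real MeasureTheory Set

/-! ### Auxiliary lemmas -/

lemma Beta_pos' {a b : ℝ} (ha : 0 < a) (hb : 0 < b) : 0 < Beta a b := by
  unfold Beta
  have := Real.Gamma_pos_of_pos ha
  have := Real.Gamma_pos_of_pos hb
  have := Real.Gamma_pos_of_pos (by linarith : 0 < a + b)
  positivity

lemma realBeta_integrable {s t : ℝ} (hs : 0 < s) (ht : 0 < t) :
    IntegrableOn (fun x : ℝ => x ^ (s-1) * (1-x) ^ (t-1)) (Ioo 0 1) := by
  have h := Complex.betaIntegral_convergent (u := (s:ℂ)) (v := (t:ℂ)) (by simpa) (by simpa)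
  rw [intervalIntegrable_iff_integrableOn_Ioc_of_le zero_le_one] at h
  have h2 : IntegrableOn (fun x : ℝ => (((x:ℂ) ^ ((s:ℂ)-1) * (1-(x:ℂ)) ^ ((t:ℂ)-1)).re))
      (Ioo 0 1) := IntegrableOn.mono_set h.re Ioo_subset_Ioc_self
  refine h2.congr_fun (fun x hx => ?_) measurableSet_Ioo
  obtain ⟨hx0, hx1⟩ := hx
  beta_reduce
  rw [show (1 : ℂ) - (x:ℂ) = ((1 - x : ℝ) : ℂ) by push_cast; ring,
    show ((s:ℂ)-1) = ((s-1:ℝ):ℂ) by push_cast; ring,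
    show ((t:ℂ)-1) = ((t-1:ℝ):ℂ) by push_cast; ring,
    ← Complex.ofReal_cpow hx0.le, ← Complex.ofReal_cpow (by linarith : (0:ℝ) ≤ 1 - x),
    ← Complex.ofReal_mul]
  norm_num

lemma realBeta_integral {s t : ℝ} (hs : 0 < s) (ht : 0 < t) :
    ∫ x in Ioo (0:ℝ) 1, x ^ (s-1) * (1-x) ^ (t-1) = Beta s t := by
  have h := Complex.Gamma_mul_Gamma_eq_betaIntegral (s := (s:ℂ)) (t := (t:ℂ)) (by simpa) (by simpa)
  have hint : Complex.betaIntegral (s:ℂ) (t:ℂ)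
      = ((∫ x in Ioo (0:ℝ) 1, x ^ (s-1) * (1-x) ^ (t-1) : ℝ) : ℂ) := by
    unfold Complex.betaIntegral
    rw [intervalIntegral.integral_of_le zero_le_one, ← integral_Ioc_eq_integral_Ioo]
    rw [setIntegral_congr_fun (μ := volume) measurableSet_Ioc
      (g := fun x : ℝ => ((x ^ (s-1) * (1-x) ^ (t-1) : ℝ) : ℂ)) (fun x hx => ?_)]
    · exact integral_ofReal
    obtain ⟨hx0, hx1⟩ := hx
    show _ = ((_ : ℝ) : ℂ)
    rw [Complex.ofReal_mul,
      show (1 : ℂ) - (x:ℂ) = ((1 - x : ℝ) : ℂ) by push_cast; ring,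
      show ((s:ℂ)-1) = ((s-1:ℝ):ℂ) by push_cast; ring,
      show ((t:ℂ)-1) = ((t-1:ℝ):ℂ) by push_cast; ring,
      ← Complex.ofReal_cpow hx0.le, ← Complex.ofReal_cpow (by linarith : (0:ℝ) ≤ 1 - x)]
  rw [hint] at h
  have hst : Complex.Gamma ((s:ℂ) + (t:ℂ)) ≠ 0 := by
    apply Complex.Gamma_ne_zero_of_re_pos
    simp only [Complex.add_re, Complex.ofReal_re]
    linarith
  have : ((∫ x in Ioo (0:ℝ) 1, x ^ (s-1) * (1-x) ^ (t-1) : ℝ) : ℂ)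
      = Complex.Gamma s * Complex.Gamma t / Complex.Gamma ((s:ℂ)+(t:ℂ)) := by
    rw [eq_div_iff hst, h]; ring
  rw [show ((s:ℂ)+(t:ℂ)) = ((s+t : ℝ) : ℂ) by push_cast; ring] at this
  rw [Complex.Gamma_ofReal, Complex.Gamma_ofReal, Complex.Gamma_ofReal] at this
  unfold Beta
  exact_mod_cast this

section subst
variable {c s t : ℝ}

lemma subst_image (hc : 0 < c) :
    (fun y : ℝ => y / (c * (1 - y))) '' Ioo 0 1 = Ioi 0 := by
  ext x
  constructor
  · rintro ⟨y, ⟨hy0, hy1⟩, rfl⟩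
    have : 0 < 1 - y := by linarith
    exact mem_Ioi.2 (by positivity)
  · intro hx
    have hx : 0 < x := hx
    refine ⟨c * x / (1 + c * x), ⟨by positivity, ?_⟩, ?_⟩
    · rw [div_lt_one (by positivity)]; linarith
    · have h1 : (0:ℝ) < 1 + c * x := by positivity
      field_simp
      ring

lemma subst_deriv (hc : 0 < c) {y : ℝ} (hy : y ∈ Ioo (0:ℝ) 1) :
    HasDerivWithinAt (fun y : ℝ => y / (c * (1 - y))) (1 / (c * (1 - y) ^ 2))
      (Ioo (0:ℝ) 1) y := by
  obtain ⟨hy0, hy1⟩ := hy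
  have h1y : (0:ℝ) < 1 - y := by linarith
  have hne : c * (1 - y) ≠ 0 := by positivity
  have h1 : HasDerivAt (fun y : ℝ => c * (1 - y)) (c * (0 - 1)) y :=
    ((hasDerivAt_const y (1:ℝ)).sub (hasDerivAt_id y)).const_mul c
  have hd := (hasDerivAt_id y).div h1 hne
  refine HasDerivAt.hasDerivWithinAt ?_
  refine hd.congr_deriv ?_
  simp only [id]
  rw [div_eq_div_iff (pow_ne_zero 2 hne) (mul_ne_zero hc.ne' (pow_ne_zero 2 h1y.ne'))]
  ring

lemma subst_inj (hc : 0 < c) :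
    InjOn (fun y : ℝ => y / (c * (1 - y))) (Ioo 0 1) := by
  rintro y₁ ⟨h10, h11⟩ y₂ ⟨h20, h21⟩ heq
  simp only at heq
  rw [div_eq_div_iff (by nlinarith) (by nlinarith)] at heq
  nlinarith

lemma subst_pointwise (hc : 0 < c) (s t : ℝ) {y : ℝ} (hy : y ∈ Ioo (0:ℝ) 1) :
    |1 / (c * (1 - y) ^ 2)| •
      ((y / (c * (1 - y))) ^ (s - 1) * (1 + c * (y / (c * (1 - y)))) ^ (-(s + t)))
      = c ^ (-s) * (y ^ (s-1) * (1-y) ^ (t-1)) := by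
  obtain ⟨hy0, hy1⟩ := hy
  have h1y : (0:ℝ) < 1 - y := by linarith
  have e1 : 1 + c * (y / (c * (1 - y))) = 1 / (1 - y) := by
    rw [eq_div_iff h1y.ne']; field_simp; ring
  rw [e1, smul_eq_mul, abs_of_pos (by positivity)]
  rw [div_rpow hy0.le (by positivity), div_rpow zero_le_one h1y.le, one_rpow,
    mul_rpow hc.le h1y.le]
  have r1 : (1 - y) ^ (-(s + t)) = ((1-y) ^ (s-1) * (1-y) ^ (t-1) * (1-y) ^ (2:ℕ))⁻¹ := by
    rw [← Real.rpow_natCast (1-y) 2, ← Real.rpow_add h1y, ← Real.rpow_add h1y,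
      Real.rpow_neg h1y.le]
    congr 1
    push_cast; ring
  have r2 : c ^ (-s) = (c ^ (s-1) * c)⁻¹ := by
    rw [← Real.rpow_add_one hc.ne', Real.rpow_neg hc.le]
    norm_num
  rw [r1, r2]
  have p1 : (0:ℝ) < c ^ (s-1) := rpow_pos_of_pos hc _
  have p2 : (0:ℝ) < (1-y) ^ (s-1) := rpow_pos_of_pos h1y _
  have p3 : (0:ℝ) < (1-y) ^ (t-1) := rpow_pos_of_pos h1y _
  have p4 : (0:ℝ) < y ^ (s-1) := rpow_pos_of_pos hy0 _
  field_simp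

lemma key_integrable (hc : 0 < c) (hs : 0 < s) (ht : 0 < t) :
    IntegrableOn (fun u : ℝ => u ^ (s-1) * (1 + c * u) ^ (-(s+t))) (Ioi 0) := by
  rw [← subst_image hc,
    integrableOn_image_iff_integrableOn_abs_deriv_smul measurableSet_Ioo
      (fun y hy => subst_deriv hc hy) (subst_inj hc)]
  refine IntegrableOn.congr_fun ((realBeta_integrable hs ht).const_mul (c ^ (-s)))
    (fun y hy => (subst_pointwise hc s t hy).symm) measurableSet_Ioo

lemma key_integral (hc : 0 < c) (hs : 0 < s) (ht : 0 < t) :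
    ∫ u in Ioi (0:ℝ), u ^ (s-1) * (1 + c * u) ^ (-(s+t)) = c ^ (-s) * Beta s t := by
  rw [← subst_image hc,
    integral_image_eq_integral_abs_deriv_smul measurableSet_Ioo
      (fun y hy => subst_deriv hc hy) (subst_inj hc)]
  rw [setIntegral_congr_fun measurableSet_Ioo (fun y hy => subst_pointwise hc s t hy)]
  rw [integral_const_mul, realBeta_integral hs ht]

end subst

section consts
variable {m₁ m₂ ν₁ ν₂ : ℝ} (hm₁ : 0 < m₁) (hm₂ : 0 < m₂) (hν₁ : 0 < ν₁) (hν₂ : 0 < ν₂)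
include hm₁ hm₂ hν₁ hν₂

lemma const_upper :
    K₀ m₁ m₂ ν₁ ν₂ * ((m₂/ν₂) ^ (-((m₁+m₂)/2)) * Beta ((m₁+m₂)/2) ((ν₂-m₁)/2)) *
      Beta (m₁/2) (m₂/2) = A₁ m₁ m₂ ν₁ ν₂ := by
  have e1 : (m₂/ν₂) ^ (-((m₁+m₂)/2)) = (ν₂/m₂) ^ (m₁/2) * (ν₂/m₂) ^ (m₂/2) := by
    rw [← Real.rpow_add (by positivity), Real.rpow_neg (by positivity),
      ← Real.inv_rpow (by positivity : (0:ℝ) ≤ m₂/ν₂), inv_div]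
    congr 1
    ring
  have e2 : (m₁/ν₁) ^ (m₁/2) * (ν₂/m₂) ^ (m₁/2) = (m₁*ν₂/(m₂*ν₁)) ^ (m₁/2) := by
    rw [← Real.mul_rpow (by positivity) (by positivity)]
    congr 1
    field_simp
  have e3 : (m₂/ν₂) ^ (m₂/2) * (ν₂/m₂) ^ (m₂/2) = 1 := by
    rw [← Real.mul_rpow (by positivity) (by positivity),
      show (m₂/ν₂) * (ν₂/m₂) = 1 by field_simp, Real.one_rpow]
  unfold K₀ A₁
  have hB1 : Beta (m₁/2) (ν₁/2) ≠ 0 := (Beta_pos' (by linarith) (by linarith)).ne'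
  have hB2 : Beta (m₂/2) (ν₂/2) ≠ 0 := (Beta_pos' (by linarith) (by linarith)).ne'
  rw [e1]
  rw [div_mul_eq_mul_div, div_mul_eq_mul_div, div_left_inj' (mul_ne_zero hB1 hB2)]
  linear_combination Beta (m₁/2) (m₂/2) * (Beta ((m₁+m₂)/2) ((ν₂-m₁)/2) *
      ((m₂/ν₂) ^ (m₂/2) * (ν₂/m₂) ^ (m₂/2))) * e2 +
    Beta (m₁/2) (m₂/2) * (Beta ((m₁+m₂)/2) ((ν₂-m₁)/2) * (m₁*ν₂/(m₂*ν₁)) ^ (m₁/2)) * e3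

lemma const_lower :
    K₀ m₁ m₂ ν₁ ν₂ * ((m₁/(2*ν₁)) ^ (-((m₁+m₂)/2)) * Beta ((m₁+m₂)/2) ((m₁-m₂+2*ν₁)/2)) *
      Beta (m₁/2) (m₂/2) = A₂ m₁ m₂ ν₁ ν₂ := by
  have e1 : (m₁/(2*ν₁)) ^ (-((m₁+m₂)/2)) = (2*ν₁/m₁) ^ (m₁/2) * (2*ν₁/m₁) ^ (m₂/2) := by
    rw [← Real.rpow_add (by positivity), Real.rpow_neg (by positivity),
      ← Real.inv_rpow (by positivity : (0:ℝ) ≤ m₁/(2*ν₁)), inv_div]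
    congr 1
    ring
  have e4 : (2:ℝ) ^ ((m₁+m₂)/2) = 2 ^ (m₁/2) * 2 ^ (m₂/2) := by
    rw [← Real.rpow_add (by norm_num)]
    congr 1
    ring
  have f2 : (m₁/ν₁) ^ (m₁/2) * (2*ν₁/m₁) ^ (m₁/2) = 2 ^ (m₁/2) := by
    rw [← Real.mul_rpow (by positivity) (by positivity)]
    congr 1
    field_simp
  have f3 : (m₂/ν₂) ^ (m₂/2) * (2*ν₁/m₁) ^ (m₂/2)
      = 2 ^ (m₂/2) * (m₂*ν₁/(m₁*ν₂)) ^ (m₂/2) := by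
    rw [← Real.mul_rpow (by positivity) (by positivity),
      ← Real.mul_rpow (by norm_num) (by positivity)]
    congr 1
    field_simp
  unfold K₀ A₂
  have hB1 : Beta (m₁/2) (ν₁/2) ≠ 0 := (Beta_pos' (by linarith) (by linarith)).ne'
  have hB2 : Beta (m₂/2) (ν₂/2) ≠ 0 := (Beta_pos' (by linarith) (by linarith)).ne'
  rw [e1, e4]
  rw [div_mul_eq_mul_div, div_mul_eq_mul_div, div_left_inj' (mul_ne_zero hB1 hB2)]
  linear_combination Beta (m₁/2) (m₂/2) * (Beta ((m₁+m₂)/2) ((m₁-m₂+2*ν₁)/2) *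
      ((m₂/ν₂) ^ (m₂/2) * (2*ν₁/m₁) ^ (m₂/2))) * f2 +
    Beta (m₁/2) (m₂/2) * (Beta ((m₁+m₂)/2) ((m₁-m₂+2*ν₁)/2) * 2 ^ (m₁/2)) * f3

end consts

/-! ### The `u`-dependent factor of the joint density and its bounds -/

/-- The `u`-dependent factor of the joint density. -/
noncomputable def gAux (m₁ m₂ ν₁ ν₂ w : ℝ) (u : ℝ) : ℝ :=
  u ^ ((m₁ + m₂) / 2 - 1) *
    ((1 + m₁ * u * w / ν₁) ^ (-(m₁ + ν₁) / 2) *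
      (1 + m₂ * u * (1 - w) / ν₂) ^ (-(m₂ + ν₂) / 2))

section bounds
variable {m₁ m₂ ν₁ ν₂ w : ℝ} (hm₁ : 0 < m₁) (hm₂ : 0 < m₂) (hν₁ : 0 < ν₁) (hν₂ : 0 < ν₂)
  (hw0 : 0 < w) (hw1 : w < 1)

include hm₁ hm₂ hν₁ hν₂ hw0 hw1 in
lemma gAux_upper (h1 : ν₂ - ν₁ < m₁ - m₂) (h2 : m₂ / ν₂ ≤ m₁ / ν₁)
    {u : ℝ} (hu : u ∈ Ioi (0:ℝ)) :
    gAux m₁ m₂ ν₁ ν₂ w u ≤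
      u ^ ((m₁ + m₂) / 2 - 1) * (1 + m₂ / ν₂ * u) ^ (-((m₁ + m₂) / 2 + (ν₂ - m₁) / 2)) := by
  have hu : (0:ℝ) < u := hu
  have hw1' : (0:ℝ) < 1 - w := by linarith
  have hX0 : (0:ℝ) ≤ m₁ * u * w / ν₁ := by positivity
  have hY0 : (0:ℝ) ≤ m₂ * u * (1 - w) / ν₂ := by positivity
  have hW0 : (0:ℝ) ≤ m₂ / ν₂ * w * u := by positivity
  have hZ0 : (0:ℝ) ≤ m₂ / ν₂ * u := by positivity
  have hX1 : (1:ℝ) ≤ 1 + m₁ * u * w / ν₁ := by linarith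
  have hq : (0:ℝ) ≤ (m₂ + ν₂) / 2 := by linarith
  have key : (1 + m₂ / ν₂ * u) ^ ((m₂ + ν₂) / 2) ≤
      (1 + m₁ * u * w / ν₁) ^ ((m₁ + ν₁) / 2) *
        (1 + m₂ * u * (1 - w) / ν₂) ^ ((m₂ + ν₂) / 2) := by
    calc (1 + m₂ / ν₂ * u) ^ ((m₂ + ν₂) / 2)
        ≤ ((1 + m₂ / ν₂ * w * u) * (1 + m₂ * u * (1 - w) / ν₂)) ^ ((m₂ + ν₂) / 2) := by
          apply rpow_le_rpow (by linarith) ?_ hq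
          have e : m₂ * u * (1 - w) / ν₂ = m₂ / ν₂ * (1 - w) * u := by ring
          nlinarith [mul_pos (mul_pos (div_pos hm₂ hν₂) hw0) hu,
            mul_pos (mul_pos (div_pos hm₂ hν₂) hw1') hu]
      _ = (1 + m₂ / ν₂ * w * u) ^ ((m₂ + ν₂) / 2) *
            (1 + m₂ * u * (1 - w) / ν₂) ^ ((m₂ + ν₂) / 2) :=
          mul_rpow (by linarith) (by linarith)
      _ ≤ (1 + m₁ * u * w / ν₁) ^ ((m₂ + ν₂) / 2) *
            (1 + m₂ * u * (1 - w) / ν₂) ^ ((m₂ + ν₂) / 2) := by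
          apply mul_le_mul_of_nonneg_right _ (rpow_nonneg (by linarith) _)
          apply rpow_le_rpow (by linarith) _ hq
          have hh := mul_le_mul_of_nonneg_right h2 (le_of_lt (mul_pos hw0 hu))
          have e : m₁ * u * w / ν₁ = m₁ / ν₁ * (w * u) := by ring
          have e2 : m₂ / ν₂ * w * u = m₂ / ν₂ * (w * u) := by ring
          linarith
      _ ≤ (1 + m₁ * u * w / ν₁) ^ ((m₁ + ν₁) / 2) *
            (1 + m₂ * u * (1 - w) / ν₂) ^ ((m₂ + ν₂) / 2) := by
          apply mul_le_mul_of_nonneg_right _ (rpow_nonneg (by linarith) _)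
          exact rpow_le_rpow_of_exponent_le hX1 (by linarith)
  unfold gAux
  apply mul_le_mul_of_nonneg_left _ (rpow_nonneg hu.le _)
  rw [show -(m₁ + ν₁) / 2 = -((m₁ + ν₁) / 2) by ring,
    show -(m₂ + ν₂) / 2 = -((m₂ + ν₂) / 2) by ring,
    show -((m₁ + m₂) / 2 + (ν₂ - m₁) / 2) = -((m₂ + ν₂) / 2) by ring,
    Real.rpow_neg (by linarith), Real.rpow_neg (by linarith),
    Real.rpow_neg (by linarith), ← mul_inv]
  exact inv_anti₀ (by positivity) key

include hm₁ hm₂ hν₁ hν₂ hw0 hw1 in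
lemma gAux_lower (h1 : ν₂ - ν₁ < m₁ - m₂) (h2 : m₂ / ν₂ ≤ m₁ / ν₁)
    {u : ℝ} (hu : u ∈ Ioi (0:ℝ)) :
    u ^ ((m₁ + m₂) / 2 - 1) *
        (1 + m₁ / (2 * ν₁) * u) ^ (-((m₁ + m₂) / 2 + (m₁ - m₂ + 2 * ν₁) / 2)) ≤
      gAux m₁ m₂ ν₁ ν₂ w u := by
  have hu : (0:ℝ) < u := hu
  have hw1' : (0:ℝ) < 1 - w := by linarith
  have hX0 : (0:ℝ) ≤ m₁ * u * w / ν₁ := by positivity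
  have hY0 : (0:ℝ) ≤ m₂ * u * (1 - w) / ν₂ := by positivity
  have hV0 : (0:ℝ) ≤ m₁ / (2 * ν₁) * u := by positivity
  have hY1 : (1:ℝ) ≤ 1 + m₂ * u * (1 - w) / ν₂ := by linarith
  have hp : (0:ℝ) ≤ (m₁ + ν₁) / 2 := by linarith
  have hsum : m₁ * u * w / ν₁ + m₂ * u * (1 - w) / ν₂ ≤ m₁ / ν₁ * u := by
    have hh := mul_le_mul_of_nonneg_right h2 (le_of_lt (mul_pos hw1' hu))
    have e : m₁ * u * w / ν₁ = m₁ / ν₁ * (w * u) := by ring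
    have e2 : m₂ * u * (1 - w) / ν₂ = m₂ / ν₂ * ((1 - w) * u) := by ring
    have e3 : m₁ / ν₁ * u = m₁ / ν₁ * (w * u) + m₁ / ν₁ * ((1 - w) * u) := by ring
    linarith
  have key : (1 + m₁ * u * w / ν₁) ^ ((m₁ + ν₁) / 2) *
        (1 + m₂ * u * (1 - w) / ν₂) ^ ((m₂ + ν₂) / 2)
      ≤ (1 + m₁ / (2 * ν₁) * u) ^ ((m₁ + m₂) / 2 + (m₁ - m₂ + 2 * ν₁) / 2) := by
    calc (1 + m₁ * u * w / ν₁) ^ ((m₁ + ν₁) / 2) *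
          (1 + m₂ * u * (1 - w) / ν₂) ^ ((m₂ + ν₂) / 2)
        ≤ (1 + m₁ * u * w / ν₁) ^ ((m₁ + ν₁) / 2) *
          (1 + m₂ * u * (1 - w) / ν₂) ^ ((m₁ + ν₁) / 2) := by
          apply mul_le_mul_of_nonneg_left _ (rpow_nonneg (by linarith) _)
          exact rpow_le_rpow_of_exponent_le hY1 (by linarith)
      _ = ((1 + m₁ * u * w / ν₁) * (1 + m₂ * u * (1 - w) / ν₂)) ^ ((m₁ + ν₁) / 2) :=
          (mul_rpow (by linarith) (by linarith)).symm
      _ ≤ ((1 + m₁ / (2 * ν₁) * u) ^ (2:ℕ)) ^ ((m₁ + ν₁) / 2) := by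
          apply rpow_le_rpow (by nlinarith) _ hp
          have h2V : m₁ * u * w / ν₁ + m₂ * u * (1 - w) / ν₂
              ≤ 2 * (m₁ / (2 * ν₁) * u) := by
            have e4 : m₁ / ν₁ * u = 2 * (m₁ / (2 * ν₁) * u) := by ring
            linarith
          nlinarith [sq_nonneg (m₁ * u * w / ν₁ - m₂ * u * (1 - w) / ν₂),
            mul_self_le_mul_self (add_nonneg hX0 hY0) h2V, hX0, hY0, hV0]
      _ = (1 + m₁ / (2 * ν₁) * u) ^ ((m₁ + m₂) / 2 + (m₁ - m₂ + 2 * ν₁) / 2) := by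
          rw [← Real.rpow_natCast (1 + m₁ / (2 * ν₁) * u) 2, ← Real.rpow_mul (by linarith)]
          congr 1
          push_cast
          ring
  unfold gAux
  apply mul_le_mul_of_nonneg_left _ (rpow_nonneg hu.le _)
  rw [show -(m₁ + ν₁) / 2 = -((m₁ + ν₁) / 2) by ring,
    show -(m₂ + ν₂) / 2 = -((m₂ + ν₂) / 2) by ring,
    Real.rpow_neg (by linarith), Real.rpow_neg (by linarith),
    Real.rpow_neg (by linarith), ← mul_inv]
  exact inv_anti₀ (by positivity) key

include hm₁ hm₂ hν₁ hν₂ hw0 hw1 in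
lemma gAux_nonneg {u : ℝ} (hu : u ∈ Ioi (0:ℝ)) : 0 ≤ gAux m₁ m₂ ν₁ ν₂ w u := by
  have hu : (0:ℝ) < u := hu
  have hw1' : (0:ℝ) < 1 - w := by linarith
  have hb1 : (0:ℝ) < 1 + m₁ * u * w / ν₁ := by positivity
  have hb2 : (0:ℝ) < 1 + m₂ * u * (1 - w) / ν₂ := by positivity
  unfold gAux
  positivity

include hm₁ hm₂ hν₁ hν₂ hw0 hw1 in
lemma gAux_meas : AEStronglyMeasurable (gAux m₁ m₂ ν₁ ν₂ w) (volume.restrict (Ioi 0)) := by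
  have hw1' : (0:ℝ) < 1 - w := by linarith
  refine ContinuousOn.aestronglyMeasurable ?_ measurableSet_Ioi
  unfold gAux
  apply ContinuousOn.mul
  · exact continuousOn_id.rpow_const fun x hx => Or.inl (ne_of_gt hx)
  apply ContinuousOn.mul
  · refine ContinuousOn.rpow_const ?_ fun x hx => Or.inl ?_
    · fun_prop
    · have hx : (0:ℝ) < x := hx
      positivity
  · refine ContinuousOn.rpow_const ?_ fun x hx => Or.inl ?_
    · fun_prop
    · have hx : (0:ℝ) < x := hx
      positivity

end bounds

/-- The marginal density `h_W(w) = ∫₀^∞ h(u,w) du` of `W` satisfies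
`A₂ φ(w) ≤ h_W(w) ≤ A₁ φ(w)` for `0 < w < 1`. -/
theorem marginal_density_bounds
    (m₁ m₂ ν₁ ν₂ : ℝ) (hm₁ : 0 < m₁) (hm₂ : 0 < m₂) (hν₁ : 0 < ν₁) (hν₂ : 0 < ν₂)
    (h1 : ν₂ - ν₁ < m₁ - m₂) (h2 : m₂ / ν₂ ≤ m₁ / ν₁)
    (h3 : 0 < m₁ - m₂ + 2 * ν₁) (h4 : m₁ < ν₂)
    (w : ℝ) (hw0 : 0 < w) (hw1 : w < 1) :
    A₂ m₁ m₂ ν₁ ν₂ * phi m₁ m₂ w ≤ (∫ u in Ioi (0 : ℝ), hDens m₁ m₂ ν₁ ν₂ u w) ∧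
      (∫ u in Ioi (0 : ℝ), hDens m₁ m₂ ν₁ ν₂ u w) ≤ A₁ m₁ m₂ ν₁ ν₂ * phi m₁ m₂ w := by
  have hw1' : (0:ℝ) < 1 - w := by linarith
  have hS : (0:ℝ) < (m₁ + m₂) / 2 := by linarith
  have ht₁ : (0:ℝ) < (ν₂ - m₁) / 2 := by linarith
  have ht₂ : (0:ℝ) < (m₁ - m₂ + 2 * ν₁) / 2 := by linarith
  have hc₁ : (0:ℝ) < m₂ / ν₂ := by positivity
  have hc₂ : (0:ℝ) < m₁ / (2 * ν₁) := by positivity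
  have hK₀ : 0 < K₀ m₁ m₂ ν₁ ν₂ := by
    unfold K₀
    have := Beta_pos' (show (0:ℝ) < m₁/2 by linarith) (show (0:ℝ) < ν₁/2 by linarith)
    have := Beta_pos' (show (0:ℝ) < m₂/2 by linarith) (show (0:ℝ) < ν₂/2 by linarith)
    positivity
  have hC : 0 < K₀ m₁ m₂ ν₁ ν₂ * (w ^ (m₁ / 2 - 1) * (1 - w) ^ (m₂ / 2 - 1)) := by
    have p1 : (0:ℝ) < w ^ (m₁ / 2 - 1) := rpow_pos_of_pos hw0 _
    have p2 : (0:ℝ) < (1 - w) ^ (m₂ / 2 - 1) := rpow_pos_of_pos hw1' _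
    positivity
  have hgUint : IntegrableOn
      (fun u : ℝ => u ^ ((m₁ + m₂) / 2 - 1) *
        (1 + m₂ / ν₂ * u) ^ (-((m₁ + m₂) / 2 + (ν₂ - m₁) / 2))) (Ioi 0) :=
    key_integrable hc₁ hS ht₁
  have hgLint : IntegrableOn
      (fun u : ℝ => u ^ ((m₁ + m₂) / 2 - 1) *
        (1 + m₁ / (2 * ν₁) * u) ^ (-((m₁ + m₂) / 2 + (m₁ - m₂ + 2 * ν₁) / 2))) (Ioi 0) :=
    key_integrable hc₂ hS ht₂
  have hgint : IntegrableOn (gAux m₁ m₂ ν₁ ν₂ w) (Ioi 0) := by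
    apply Integrable.mono' hgUint (gAux_meas hm₁ hm₂ hν₁ hν₂ hw0 hw1)
    rw [ae_restrict_iff' measurableSet_Ioi]
    exact ae_of_all _ fun u hu => by
      rw [Real.norm_eq_abs, abs_of_nonneg (gAux_nonneg hm₁ hm₂ hν₁ hν₂ hw0 hw1 hu)]
      exact gAux_upper hm₁ hm₂ hν₁ hν₂ hw0 hw1 h1 h2 hu
  have hI1 : ∫ u in Ioi (0:ℝ), gAux m₁ m₂ ν₁ ν₂ w u
      ≤ (m₂/ν₂) ^ (-((m₁ + m₂) / 2)) * Beta ((m₁ + m₂) / 2) ((ν₂ - m₁) / 2) := by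
    rw [← key_integral hc₁ hS ht₁]
    exact setIntegral_mono_on hgint hgUint measurableSet_Ioi
      (fun u hu => gAux_upper hm₁ hm₂ hν₁ hν₂ hw0 hw1 h1 h2 hu)
  have hI2 : (m₁/(2*ν₁)) ^ (-((m₁ + m₂) / 2)) * Beta ((m₁ + m₂) / 2) ((m₁ - m₂ + 2 * ν₁) / 2)
      ≤ ∫ u in Ioi (0:ℝ), gAux m₁ m₂ ν₁ ν₂ w u := by
    rw [← key_integral hc₂ hS ht₂]
    exact setIntegral_mono_on hgLint hgint measurableSet_Ioi
      (fun u hu => gAux_lower hm₁ hm₂ hν₁ hν₂ hw0 hw1 h1 h2 hu)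
  have hval : ∫ u in Ioi (0:ℝ), hDens m₁ m₂ ν₁ ν₂ u w
      = K₀ m₁ m₂ ν₁ ν₂ * (w ^ (m₁ / 2 - 1) * (1 - w) ^ (m₂ / 2 - 1)) *
        ∫ u in Ioi (0:ℝ), gAux m₁ m₂ ν₁ ν₂ w u := by
    rw [← integral_const_mul]
    refine setIntegral_congr_fun measurableSet_Ioi fun u _ => ?_
    unfold hDens gAux
    ring
  have hBab : 0 < Beta (m₁/2) (m₂/2) := Beta_pos' (by linarith) (by linarith)
  constructor
  · have heq : A₂ m₁ m₂ ν₁ ν₂ * phi m₁ m₂ w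
        = K₀ m₁ m₂ ν₁ ν₂ * (w ^ (m₁ / 2 - 1) * (1 - w) ^ (m₂ / 2 - 1)) *
          ((m₁/(2*ν₁)) ^ (-((m₁ + m₂) / 2)) *
            Beta ((m₁ + m₂) / 2) ((m₁ - m₂ + 2 * ν₁) / 2)) := by
      rw [← const_lower hm₁ hm₂ hν₁ hν₂]
      unfold phi
      field_simp
    rw [heq, hval]
    exact mul_le_mul_of_nonneg_left hI2 hC.le
  · have heq : A₁ m₁ m₂ ν₁ ν₂ * phi m₁ m₂ w
        = K₀ m₁ m₂ ν₁ ν₂ * (w ^ (m₁ / 2 - 1) * (1 - w) ^ (m₂ / 2 - 1)) *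
          ((m₂/ν₂) ^ (-((m₁ + m₂) / 2)) * Beta ((m₁ + m₂) / 2) ((ν₂ - m₁) / 2)) := by
      rw [← const_upper hm₁ hm₂ hν₁ hν₂]
      unfold phi
      field_simp
    rw [heq, hval]
    exact mul_le_mul_of_nonneg_left hI1 hC.le
end
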